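/- If w and u are nonempty rich words, u is a palindromic factor of w, then every complete return to u in w is a palindrome. -/

import Mathlib

def Rich {A : Type*} (w : List A) : Prop :=
  {p : List A | p.reverse = p ∧ p <:+: w}.ncard = w.length + 1
def occ {A : Type*} [DecidableEq A] (u v : List A) : ℕ :=
  ((List.range (u.length + 1)).filter (fun i => v.isPrefixOf (u.drop i))).length

namespace RichAux

variable {A : Type*}

def palSet (w : List A) : Set (List A) := {p : List A | p.reverse = p ∧ p <:+: w}

lemma rich_iff (w : List A) : Rich w ↔ (palSet w).ncard = w.length + 1 := Iff.rfl

lemma palSet_finite (w : List A) : (palSet w).Finite := by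
  apply Set.Finite.subset (w.sublists.finite_toSet)
  intro p hp
  simp only [Set.mem_setOf_eq, List.mem_sublists]
  exact hp.2.sublist

/-- two palindromic suffixes: shorter is a prefix of longer -/
lemma pal_suffix_prefix {p q w : List A} (hp : p.reverse = p) (hq : q.reverse = q)
    (hpw : p <:+ w) (hqw : q <:+ w) (hl : p.length ≤ q.length) : p <+: q := by
  have h : p <:+ q := List.suffix_of_suffix_length_le hpw hqw hl
  have := List.reverse_prefix.mpr h
  rwa [hp, hq] at this

lemma infix_concat {p v : List A} {a : A} (h : p <:+: (v ++ [a])) :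
    p <:+: v ∨ p <:+ (v ++ [a]) := by
  obtain ⟨s, t, hst⟩ := h
  rcases List.eq_nil_or_concat t with rfl | ⟨t', b, rfl⟩
  · right
    exact ⟨s, by simpa using hst⟩
  · left
    have : (s ++ p ++ t') ++ [b] = v ++ [a] := by
      simpa [List.concat_eq_append] using hst
    have hv : s ++ p ++ t' = v := by
      have := congrArg List.dropLast this
      simpa [List.dropLast_concat] using this
    exact ⟨s, t', hv⟩

/-- a proper prefix of a suffix of w is an infix of w.dropLast -/
lemma proper_prefix_suffix_infix {p q w : List A} (hpq : p <+: q)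
    (hl : p.length < q.length) (hq : q <:+ w) : p <:+: w.dropLast := by
  obtain ⟨t, rfl⟩ := hpq
  obtain ⟨s, rfl⟩ := hq
  have ht : t ≠ [] := by
    intro h; subst h; simp at hl
  refine ⟨s, t.dropLast, ?_⟩
  rw [← List.append_assoc, List.dropLast_append_of_ne_nil ht]

lemma step_subsingleton (v : List A) (a : A) :
    (palSet (v ++ [a]) \ palSet v).Subsingleton := by
  intro p hp q hq
  have hps : p <:+ (v ++ [a]) := by
    rcases infix_concat hp.1.2 with h | h
    · exact absurd ⟨hp.1.1, h⟩ hp.2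
    · exact h
  have hqs : q <:+ (v ++ [a]) := by
    rcases infix_concat hq.1.2 with h | h
    · exact absurd ⟨hq.1.1, h⟩ hq.2
    · exact h
  rcases lt_trichotomy p.length q.length with h | h | h
  · exfalso
    have hpre := pal_suffix_prefix hp.1.1 hq.1.1 hps hqs h.le
    have := proper_prefix_suffix_infix hpre h hqs
    rw [List.dropLast_concat] at this
    exact hp.2 ⟨hp.1.1, this⟩
  · exact List.suffix_of_suffix_length_le hps hqs h.le |>.eq_of_length h
  · exfalso
    have hpre := pal_suffix_prefix hq.1.1 hp.1.1 hqs hps h.le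
    have := proper_prefix_suffix_infix hpre h hps
    rw [List.dropLast_concat] at this
    exact hq.2 ⟨hq.1.1, this⟩

lemma palSet_mono {v w : List A} (h : v <+: w) : palSet v ⊆ palSet w := by
  rintro p ⟨hp, hf⟩
  exact ⟨hp, hf.trans h.isInfix⟩

lemma step_le (v : List A) (a : A) :
    (palSet (v ++ [a])).ncard ≤ (palSet v).ncard + 1 := by
  have hsub : palSet (v ++ [a]) ⊆ palSet v ∪ (palSet (v ++ [a]) \ palSet v) := by
    intro p hp
    by_cases h : p ∈ palSet v
    · exact Or.inl h
    · exact Or.inr ⟨hp, h⟩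
  calc (palSet (v ++ [a])).ncard
      ≤ (palSet v ∪ (palSet (v ++ [a]) \ palSet v)).ncard :=
        Set.ncard_le_ncard hsub (((palSet_finite v).union
          ((palSet_finite (v ++ [a])).diff)))
    _ ≤ (palSet v).ncard + (palSet (v ++ [a]) \ palSet v).ncard := Set.ncard_union_le _ _
    _ ≤ (palSet v).ncard + 1 := by
        have h1 : (palSet (v ++ [a]) \ palSet v).ncard ≤ 1 := by
          rcases (step_subsingleton v a).eq_empty_or_singleton with h | ⟨x, h⟩ <;>
            simp [h]
        omega

lemma palSet_nil : palSet (A := A) [] = {[]} := by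
  ext p
  simp only [palSet, Set.mem_setOf_eq, List.infix_nil, Set.mem_singleton_iff]
  constructor
  · exact fun h => h.2
  · rintro rfl; simp

lemma ncard_le (w : List A) : (palSet w).ncard ≤ w.length + 1 := by
  induction w using List.reverseRecOn with
  | nil => simp [palSet_nil]
  | append_singleton v a ih =>
      have := step_le v a
      simp only [List.length_append, List.length_singleton]
      omega

lemma rich_of_concat {v : List A} {a : A} (h : Rich (v ++ [a])) : Rich v := by
  rw [rich_iff] at *
  have h1 := step_le v a
  have h2 := ncard_le v
  simp only [List.length_append, List.length_singleton] at h
  omega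

lemma rich_of_prefix {v w : List A} (h : v <+: w) (hw : Rich w) : Rich v := by
  obtain ⟨t, rfl⟩ := h
  induction t using List.reverseRecOn with
  | nil => simpa using hw
  | append_singleton t' a ih =>
      apply ih
      rw [← List.append_assoc] at hw
      exact rich_of_concat hw

lemma palSet_reverse (w : List A) : palSet w.reverse = List.reverse '' palSet w := by
  ext p
  constructor
  · rintro ⟨hp, hf⟩
    refine ⟨p, ⟨hp, ?_⟩, hp⟩
    rw [← List.reverse_infix, hp]
    exact hf
  · rintro ⟨q, ⟨hq, hf⟩, rfl⟩
    exact ⟨by rw [List.reverse_reverse, hq], List.reverse_infix.mpr hf⟩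

lemma rich_reverse {w : List A} (h : Rich w) : Rich w.reverse := by
  rw [rich_iff] at *
  rw [palSet_reverse, Set.ncard_image_of_injective _ List.reverse_injective,
    List.length_reverse]
  exact h

lemma rich_of_suffix {v w : List A} (h : v <:+ w) (hw : Rich w) : Rich v := by
  have h1 : v.reverse <+: w.reverse := List.reverse_prefix.mpr h
  have := rich_of_prefix h1 (rich_reverse hw)
  have := rich_reverse this
  simpa using this

lemma rich_of_infix {v w : List A} (h : v <:+: w) (hw : Rich w) : Rich v := by
  obtain ⟨s, t, rfl⟩ := h
  have hsuf : v ++ t <:+ s ++ v ++ t := ⟨s, by simp⟩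
  exact rich_of_prefix ⟨t, rfl⟩ (rich_of_suffix hsuf hw)

/-- a nonempty rich word has a unioccurrent palindromic suffix -/
lemma exists_unioccurrent {r : List A} (hr : Rich r) (hne : r ≠ []) :
    ∃ P : List A, P.reverse = P ∧ P <:+ r ∧ ¬ P <:+: r.dropLast := by
  have hdrop : Rich r.dropLast := rich_of_prefix (List.dropLast_prefix r) hr
  rw [rich_iff] at hr hdrop
  have hlen : r.dropLast.length = r.length - 1 := by simp
  have hlen' : 1 ≤ r.length := List.length_pos_iff.mpr hne
  have hnsub : ¬ palSet r ⊆ palSet r.dropLast := by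
    intro hsub
    have := Set.ncard_le_ncard hsub (palSet_finite _)
    omega
  obtain ⟨P, hPmem, hPnot⟩ := Set.diff_nonempty.mpr hnsub
  refine ⟨P, hPmem.1, ?_, ?_⟩
  · have hr' : r.dropLast ++ [r.getLast hne] = r := List.dropLast_append_getLast hne
    have hPf : P <:+: (r.dropLast ++ [r.getLast hne]) := by rw [hr']; exact hPmem.2
    rcases infix_concat hPf with h | h
    · exact absurd ⟨hPmem.1, h⟩ hPnot
    · rwa [hr'] at h
  · intro hcon
    exact hPnot ⟨hPmem.1, hcon⟩

lemma drop_of_suffix {u r : List A} (h : u <:+ r) :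
    r.drop (r.length - u.length) = u := by
  obtain ⟨s, rfl⟩ := h
  simp

end RichAux

open RichAux

theorem stmt3 {A : Type*} [DecidableEq A] (w u : List A)
    (hw : Rich w) (hu : Rich u) (hwne : w ≠ []) (hune : u ≠ [])
    (hpal : u.reverse = u) (hfac : u <:+: w) :
    ∀ r : List A, r <:+: w → u <+: r → u <:+ r → occ r u = 2 →
      r.reverse = r := by
  intro r hrw hupre husuf hocc
  by_cases hru : r = u
  · rw [hru]; exact hpal
  have hrne : r ≠ [] := by
    intro h; subst h
    exact hune (List.prefix_nil.mp hupre)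
  have hult : u.length < r.length := by
    have hle := hupre.length_le
    rcases eq_or_lt_of_le hle with h | h
    · exact absurd (hupre.eq_of_length h).symm hru
    · exact h
  have hrich : Rich r := rich_of_infix hrw hw
  obtain ⟨P, hPpal, hPsuf, hPnot⟩ := exists_unioccurrent hrich hrne
  -- u.length ≤ P.length
  have huP : u.length ≤ P.length := by
    by_contra h
    push_neg at h
    have hpre := pal_suffix_prefix hPpal hpal hPsuf husuf h.le
    exact hPnot (proper_prefix_suffix_infix hpre h husuf)
  have hupreP : u <+: P := pal_suffix_prefix hpal hPpal husuf hPsuf huP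
  -- set up occurrence list
  set L := (List.range (r.length + 1)).filter (fun i => u.isPrefixOf (r.drop i)) with hL
  have hmem : ∀ i : ℕ, i ∈ L ↔ i < r.length + 1 ∧ u <+: r.drop i := by
    intro i
    simp [hL, List.mem_filter, List.mem_range, List.isPrefixOf_iff_prefix]
  have hnodup : L.Nodup := List.nodup_range.filter _
  have hlenL : L.length = 2 := hocc
  have h0 : (0 : ℕ) ∈ L := (hmem 0).mpr ⟨by omega, by simpa using hupre⟩
  set d := r.length - u.length with hd
  have hdpos : 0 < d := by omega
  have hdL : d ∈ L := by
    rw [hmem]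
    refine ⟨by omega, ?_⟩
    rw [hd, drop_of_suffix husuf]
  set j := r.length - P.length with hj
  have hPle : P.length ≤ r.length := hPsuf.length_le
  have hjL : j ∈ L := by
    rw [hmem]
    refine ⟨by omega, ?_⟩
    rw [hj, drop_of_suffix hPsuf]
    exact hupreP
  -- L.toFinset = {0, d}
  have hcard : L.toFinset.card = 2 := by
    rw [List.toFinset_card_of_nodup hnodup, hlenL]
  have hsub : ({0, d} : Finset ℕ) ⊆ L.toFinset := by
    intro x hx
    simp only [Finset.mem_insert, Finset.mem_singleton] at hx
    rcases hx with rfl | rfl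
    · exact List.mem_toFinset.mpr h0
    · exact List.mem_toFinset.mpr hdL
  have hpair : ({0, d} : Finset ℕ).card = 2 := by
    rw [Finset.card_pair (by omega)]
  have heq : ({0, d} : Finset ℕ) = L.toFinset :=
    Finset.eq_of_subset_of_card_le hsub (by omega)
  have hjmem : j ∈ ({0, d} : Finset ℕ) := by
    rw [heq]; exact List.mem_toFinset.mpr hjL
  simp only [Finset.mem_insert, Finset.mem_singleton] at hjmem
  rcases hjmem with hj0 | hjd
  · -- j = 0 : P = r, so r is a palindrome
    have : P.length = r.length := by omega
    have := hPsuf.eq_of_length this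
    rw [← this]; exact hPpal
  · -- j = d : P = u, contradiction with unioccurrence
    exfalso
    have hlenPu : P.length = u.length := by omega
    have hPu : P = u := List.suffix_of_suffix_length_le hPsuf husuf hlenPu.le
      |>.eq_of_length hlenPu
    apply hPnot
    rw [hPu]
    exact (proper_prefix_suffix_infix hupre hult (List.suffix_refl r))
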